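/- Risk-neutral valuation of self-financing strategies (the static hedging principle in the CRR model): every predictable self-financing trading strategy with terminal wealth V : Ω → ℝ has initial wealth equal to (1+r)^(−T) * ∑_{ω ∈ Ω} V ω * q^(x(ω)) * (1−q)^(T − x(ω)). In particular, any two predictable self-financing strategies with the same terminal wealth have the same initial wealth. -/

import Mathlib

open Finset

/-- Stock price at time `t` in the `T`-step CRR binomial model. -/
def crrStock (T : ℕ) (S0 u d : ℝ) (t : ℕ) (ω : Fin T → Bool) : ℝ :=
  S0 * ∏ i ∈ Finset.univ.filter (fun i : Fin T => (i : ℕ) < t),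
    (if ω i then 1 + u else 1 + d)

/-- A trading strategy `(a, b)` is predictable if the holdings chosen at time `t`
depend only on the first `t` coordinates of the trajectory. -/
def crrPredictable {T : ℕ} (a b : Fin T → (Fin T → Bool) → ℝ) : Prop :=
  ∀ (t : Fin T) (ω ω' : Fin T → Bool),
    (∀ i : Fin T, (i : ℕ) < (t : ℕ) → ω i = ω' i) →
      a t ω = a t ω' ∧ b t ω = b t ω'

/-- Self-financing condition for the strategy `(a, b)`. -/
def crrSelfFinancing {T : ℕ} (S0 u d r : ℝ) (a b : Fin T → (Fin T → Bool) → ℝ) : Prop :=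
  ∀ (t : ℕ) (ht : t + 1 < T) (ω : Fin T → Bool),
    a ⟨t, by omega⟩ ω * crrStock T S0 u d (t + 1) ω + b ⟨t, by omega⟩ ω * (1 + r) ^ (t + 1)
      = a ⟨t + 1, ht⟩ ω * crrStock T S0 u d (t + 1) ω + b ⟨t + 1, ht⟩ ω * (1 + r) ^ (t + 1)

/-- Initial wealth of the strategy `(a, b)`. -/
def crrInitialWealth {T : ℕ} (hT : 0 < T) (S0 : ℝ) (a b : Fin T → (Fin T → Bool) → ℝ)
    (ω : Fin T → Bool) : ℝ :=
  a ⟨0, hT⟩ ω * S0 + b ⟨0, hT⟩ ω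

/-- Terminal wealth of the strategy `(a, b)`. -/
def crrTerminalWealth {T : ℕ} (hT : 0 < T) (S0 u d r : ℝ)
    (a b : Fin T → (Fin T → Bool) → ℝ) (ω : Fin T → Bool) : ℝ :=
  a ⟨T - 1, by omega⟩ ω * crrStock T S0 u d T ω + b ⟨T - 1, by omega⟩ ω * (1 + r) ^ T

/-- Number of up-moves in the trajectory `ω`. -/
def crrUps {T : ℕ} (ω : Fin T → Bool) : ℕ :=
  (Finset.univ.filter (fun i : Fin T => ω i = true)).card

-- auxiliary
lemma crrStock_indep (T : ℕ) (S0 u d : ℝ) (t : ℕ) (ω ω' : Fin T → Bool)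
    (h : ∀ i : Fin T, (i : ℕ) < t → ω i = ω' i) :
    crrStock T S0 u d t ω = crrStock T S0 u d t ω' := by
  unfold crrStock
  congr 1
  refine Finset.prod_congr rfl fun i hi => ?_
  simp only [mem_filter, mem_univ, true_and] at hi
  rw [h i hi]

lemma crrStock_succ (T : ℕ) (S0 u d : ℝ) (t : ℕ) (ht : t < T) (ω : Fin T → Bool) :
    crrStock T S0 u d (t + 1) ω
      = crrStock T S0 u d t ω * (if ω ⟨t, ht⟩ then 1 + u else 1 + d) := by
  unfold crrStock
  have hset : (Finset.univ.filter (fun i : Fin T => (i : ℕ) < t + 1))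
      = insert ⟨t, ht⟩ (Finset.univ.filter (fun i : Fin T => (i : ℕ) < t)) := by
    ext i
    simp [Fin.ext_iff]
    omega
  rw [hset, Finset.prod_insert (by simp)]
  ring

lemma crrStock_zero (T : ℕ) (S0 u d : ℝ) (ω : Fin T → Bool) :
    crrStock T S0 u d 0 ω = S0 := by
  unfold crrStock
  have : (Finset.univ.filter (fun i : Fin T => (i : ℕ) < 0)) = ∅ := by
    ext i; simp
  rw [this]; simp

/-- wealth process indexed by ℕ times up to T -/
def crrW {T : ℕ} (hT : 0 < T) (S0 u d r : ℝ) (a b : Fin T → (Fin T → Bool) → ℝ)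
    (t : ℕ) (ω : Fin T → Bool) : ℝ :=
  a ⟨min t (T - 1), by omega⟩ ω * crrStock T S0 u d t ω
    + b ⟨min t (T - 1), by omega⟩ ω * (1 + r) ^ t


/-- risk-neutral valuation of self-financing strategies in the CRR model:
the initial wealth of any predictable self-financing strategy equals the discounted
risk-neutral weighted sum of its terminal wealth over all trajectories. -/
theorem crr_risk_neutral_valuation
    (T : ℕ) (hT : 0 < T) (S0 u d r : ℝ) (hS0 : 0 < S0)
    (hd : -1 < d) (hdr : d < r) (hru : r < u)
    (a b : Fin T → (Fin T → Bool) → ℝ)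
    (hpred : crrPredictable a b) (hsf : crrSelfFinancing S0 u d r a b) :
    ∀ ω, crrInitialWealth hT S0 a b ω =
      (1 + r) ^ (-(T : ℤ)) * ∑ ω' : Fin T → Bool,
        crrTerminalWealth hT S0 u d r a b ω'
          * ((r - d) / (u - d)) ^ crrUps ω'
          * (1 - (r - d) / (u - d)) ^ (T - crrUps ω') := by
  intro ω
  set q : ℝ := (r - d) / (u - d) with hq
  have hud : u - d ≠ 0 := by nlinarith
  have hR : (0 : ℝ) < 1 + r := by linarith
  have hqud : q * (1 + u) + (1 - q) * (1 + d) = 1 + r := by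
    field_simp [hq]
    linear_combination (u - d) * hq + div_mul_cancel₀ (r - d) hud
  set W := crrW hT S0 u d r a b with hW
  set w : (Fin T → Bool) → ℝ := fun ω' => ∏ i, (if ω' i then q else 1 - q) with hwdef
  -- one-step wealth update
  have hstep : ∀ (t : ℕ) (h : t + 1 ≤ T) (ω' : Fin T → Bool),
      W (t + 1) ω' = a ⟨t, by omega⟩ ω' * crrStock T S0 u d (t + 1) ω'
        + b ⟨t, by omega⟩ ω' * (1 + r) ^ (t + 1) := by
    intro t h ω'
    rcases lt_or_eq_of_le h with h' | h'
    · have hmin : min (t + 1) (T - 1) = t + 1 := by omega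
      simp only [hW, crrW, hmin]
      exact ((hsf t h' ω')).symm
    · have hmin : min (t + 1) (T - 1) = t := by omega
      simp only [hW, crrW, hmin]
  -- the key martingale step
  have hFstep : ∀ (t : ℕ), t + 1 ≤ T →
      (∑ ω' : Fin T → Bool, W (t + 1) ω' * w ω')
        = (1 + r) * ∑ ω' : Fin T → Bool, W t ω' * w ω' := by
    intro t h
    have htT : t < T := by omega
    set tF : Fin T := ⟨t, htT⟩ with htF
    set e := Equiv.funSplitAt tF Bool with he
    rw [← Equiv.sum_comp e.symm (fun ω' => W (t + 1) ω' * w ω'),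
        ← Equiv.sum_comp e.symm (fun ω' => W t ω' * w ω'),
        Fintype.sum_prod_type, Fintype.sum_prod_type]
    rw [Fintype.sum_bool, Fintype.sum_bool, ← Finset.sum_add_distrib,
        ← Finset.sum_add_distrib, Finset.mul_sum]
    refine Finset.sum_congr rfl fun ρ _ => ?_
    set ω₁ := e.symm (true, ρ) with hω₁
    set ω₀ := e.symm (false, ρ) with hω₀
    have hω₁t : ω₁ tF = true := by simp [hω₁, he, Equiv.funSplitAt]
    have hω₀t : ω₀ tF = false := by simp [hω₀, he, Equiv.funSplitAt]
    have hagree : ∀ i : Fin T, i ≠ tF → ω₁ i = ω₀ i := by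
      intro i hi
      simp [hω₁, hω₀, he, Equiv.funSplitAt, hi]
    have hagree_lt : ∀ i : Fin T, (i : ℕ) < t → ω₁ i = ω₀ i := by
      intro i hi
      exact hagree i (by simp [htF, Fin.ext_iff]; omega)
    obtain ⟨ha, hb⟩ := hpred tF ω₁ ω₀ hagree_lt
    have hS : crrStock T S0 u d t ω₁ = crrStock T S0 u d t ω₀ :=
      crrStock_indep T S0 u d t ω₁ ω₀ hagree_lt
    have hS1 : crrStock T S0 u d (t + 1) ω₁ = crrStock T S0 u d t ω₀ * (1 + u) := by
      rw [crrStock_succ T S0 u d t htT ω₁, hS]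
      rw [show ω₁ ⟨t, htT⟩ = true from hω₁t]; simp
    have hS0' : crrStock T S0 u d (t + 1) ω₀ = crrStock T S0 u d t ω₀ * (1 + d) := by
      rw [crrStock_succ T S0 u d t htT ω₀]
      rw [show ω₀ ⟨t, htT⟩ = false from hω₀t]; simp
    set P : ℝ := ∏ i ∈ Finset.univ.erase tF, (if ω₀ i then q else 1 - q) with hP
    have hw1 : w ω₁ = q * P := by
      simp only [hwdef]
      rw [← Finset.mul_prod_erase Finset.univ _ (Finset.mem_univ tF), hω₁t]
      simp only [if_true]
      congr 1
      refine Finset.prod_congr rfl fun i hi => ?_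
      rw [hagree i (Finset.mem_erase.1 hi).1]
    have hw0 : w ω₀ = (1 - q) * P := by
      simp only [hwdef]
      rw [← Finset.mul_prod_erase Finset.univ _ (Finset.mem_univ tF), hω₀t]
      simp
      exact Or.inl rfl
    have hWt : W t ω₁ = W t ω₀ := by
      have hmin : min t (T - 1) = t := by omega
      have ha' : a ⟨min t (T - 1), by omega⟩ ω₁ = a ⟨min t (T - 1), by omega⟩ ω₀ := by
        have := (hpred ⟨min t (T - 1), by omega⟩ ω₁ ω₀ (fun i hi => hagree_lt i (by simp at hi; omega))).1
        exact this
      have hb' : b ⟨min t (T - 1), by omega⟩ ω₁ = b ⟨min t (T - 1), by omega⟩ ω₀ := by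
        exact (hpred ⟨min t (T - 1), by omega⟩ ω₁ ω₀ (fun i hi => hagree_lt i (by simp at hi; omega))).2
      simp only [hW, crrW, ha', hb', hS]
    have hWt0 : W t ω₀ = a tF ω₀ * crrStock T S0 u d t ω₀ + b tF ω₀ * (1 + r) ^ t := by
      have hmin : min t (T - 1) = t := by omega
      simp only [hW, crrW, hmin, htF]
    rw [hstep t h ω₁, hstep t h ω₀, hS1, hS0', hw1, hw0, hWt, hWt0, ha, hb]
    show (a tF ω₀ * (crrStock T S0 u d t ω₀ * (1 + u)) + b tF ω₀ * (1 + r) ^ (t + 1)) * (q * P)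
        + (a tF ω₀ * (crrStock T S0 u d t ω₀ * (1 + d)) + b tF ω₀ * (1 + r) ^ (t + 1)) * ((1 - q) * P)
      = (1 + r) * ((a tF ω₀ * crrStock T S0 u d t ω₀ + b tF ω₀ * (1 + r) ^ t) * (q * P)
        + (a tF ω₀ * crrStock T S0 u d t ω₀ + b tF ω₀ * (1 + r) ^ t) * ((1 - q) * P))
    linear_combination (a tF ω₀ * crrStock T S0 u d t ω₀ * P) * hqud
  -- iterate
  have hF : ∀ t, t ≤ T →
      (∑ ω' : Fin T → Bool, W t ω' * w ω')
        = (1 + r) ^ t * ∑ ω' : Fin T → Bool, W 0 ω' * w ω' := by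
    intro t
    induction t with
    | zero => intro _; simp
    | succ n ih =>
        intro hn
        rw [hFstep n hn, ih (by omega), pow_succ]
        ring
  -- weights sum to 1
  have hwsum : (∑ ω' : Fin T → Bool, w ω') = 1 := by
    have := Finset.prod_univ_sum (fun _ : Fin T => (Finset.univ : Finset Bool))
      (fun _ b => if b then q else 1 - q)
    rw [Fintype.piFinset_univ] at this
    rw [hwdef, ← this]
    simp
  -- W 0 is the (constant) initial wealth
  have hW0 : ∀ ω' : Fin T → Bool, W 0 ω' = crrInitialWealth hT S0 a b ω := by
    intro ω'
    have hmin : min 0 (T - 1) = 0 := by omega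
    obtain ⟨ha, hb⟩ := hpred ⟨0, hT⟩ ω' ω (fun i hi => by simp at hi)
    simp only [hW, crrW, hmin, crrStock_zero, crrInitialWealth, pow_zero, mul_one]
    rw [show (⟨0, by omega⟩ : Fin T) = ⟨0, hT⟩ from rfl, ha, hb]
  -- W T is the terminal wealth
  have hWT : ∀ ω' : Fin T → Bool, W T ω' = crrTerminalWealth hT S0 u d r a b ω' := by
    intro ω'
    have hmin : min T (T - 1) = T - 1 := by omega
    simp only [hW, crrW, hmin, crrTerminalWealth]
  -- weights in closed form
  have hwform : ∀ ω' : Fin T → Bool, w ω' = q ^ crrUps ω' * (1 - q) ^ (T - crrUps ω') := by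
    intro ω'
    simp only [hwdef]
    rw [← Finset.prod_filter_mul_prod_filter_not Finset.univ (fun i => ω' i = true)]
    have h1 : ∀ i ∈ Finset.univ.filter (fun i : Fin T => ω' i = true),
        (if ω' i then q else 1 - q) = q := by intro i hi; simp at hi; simp [hi]
    have h2 : ∀ i ∈ Finset.univ.filter (fun i : Fin T => ¬ (ω' i = true)),
        (if ω' i then q else 1 - q) = 1 - q := by intro i hi; simp at hi; simp [hi]
    rw [Finset.prod_congr rfl h1, Finset.prod_congr rfl h2, Finset.prod_const,
        Finset.prod_const]
    have hcard : (Finset.univ.filter (fun i : Fin T => ¬ (ω' i = true))).card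
        = T - crrUps ω' := by
      have := Finset.card_filter_add_card_filter_not
        (s := (Finset.univ : Finset (Fin T))) (p := fun i : Fin T => ω' i = true)
      simp only [Finset.card_univ, Fintype.card_fin] at this
      unfold crrUps
      omega
    rw [hcard]
    rfl
  -- put it together
  have hWTsum : (∑ ω' : Fin T → Bool, W T ω' * w ω')
      = ∑ ω' : Fin T → Bool, crrTerminalWealth hT S0 u d r a b ω' * w ω' :=
    Finset.sum_congr rfl fun ω' _ => by rw [hWT ω']
  have hW0sum : (∑ ω' : Fin T → Bool, W 0 ω' * w ω') = crrInitialWealth hT S0 a b ω := by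
    calc (∑ ω' : Fin T → Bool, W 0 ω' * w ω')
        = ∑ ω' : Fin T → Bool, crrInitialWealth hT S0 a b ω * w ω' :=
          Finset.sum_congr rfl fun ω' _ => by rw [hW0 ω']
      _ = crrInitialWealth hT S0 a b ω * ∑ ω' : Fin T → Bool, w ω' :=
          (Finset.mul_sum _ _ _).symm
      _ = crrInitialWealth hT S0 a b ω := by rw [hwsum, mul_one]
  have hterm : (∑ ω' : Fin T → Bool,
        crrTerminalWealth hT S0 u d r a b ω' * q ^ crrUps ω'
          * (1 - q) ^ (T - crrUps ω'))
      = ∑ ω' : Fin T → Bool, crrTerminalWealth hT S0 u d r a b ω' * w ω' :=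
    Finset.sum_congr rfl fun ω' _ => by rw [hwform ω', mul_assoc]
  have hfinal := hF T le_rfl
  rw [hWTsum, hW0sum] at hfinal
  rw [hterm, hfinal, zpow_neg, zpow_natCast]
  have hRT : ((1 : ℝ) + r) ^ T ≠ 0 := pow_ne_zero _ (by linarith)
  field_simp
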